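/- In the Sequential Conditional Independent Pairs algorithm for discrete random variables, the joint probability mass function of (X_{1:p}, X̃_{1:j}) after step j equals L(X_{-j}, X_j, X̃_{1:j-1}) · L(X_{-j}, X̃_j, X̃_{1:j-1}) / Σ_u L(X_{-j}, u, X̃_{1:j-1}), where L denotes the joint PMF of (X_{1:p}, X̃_{1:j-1}) after step j-1; in particular this expression is symmetric under exchanging the values of X_j and X̃_j. -/
import Mathlib


open MeasureTheory ProbabilityTheory

/-- The joint PMF formula at a step of the Sequential Conditional Independent Pairs algorithm
for discrete variables: if the new knockoff `T` (for coordinate `j`) is conditionally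
independent of `X_j` given `(X_{-j}, X̃_{1:j-1})` with the same conditional law as `X_j`, then
the joint PMF of `(X, X̃_{1:j-1}, T)` equals
`L(x, x̃) · L(x_{-j}, u, x̃) / ∑_{u'} L(x_{-j}, u', x̃)`, where `L` is the joint PMF of
`(X, X̃_{1:j-1})`; in particular it is symmetric under exchanging the values of `X_j` and `T`. -/
theorem scip_step_pmf_formula
    {Ω A : Type*} [MeasurableSpace Ω] [MeasurableSpace A] [MeasurableSingletonClass A]
    [Fintype A]
    {μ : Measure Ω} [IsProbabilityMeasure μ]
    {p m : ℕ} (j : Fin p)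
    (X : Ω → Fin p → A) (Xt : Ω → Fin m → A) (T : Ω → A)
    (hX : Measurable X) (hXt : Measurable Xt) (hT : Measurable T)
    -- `T` is conditionally independent of `X_j` given `(X_{-j}, X̃_{1:j-1})`:
    (hci : ∀ (x : Fin p → A) (xt : Fin m → A) (u : A),
      μ {ω | X ω = x ∧ Xt ω = xt ∧ T ω = u}
          * μ {ω | (∀ i, i ≠ j → X ω i = x i) ∧ Xt ω = xt}
        = μ {ω | X ω = x ∧ Xt ω = xt}
          * μ {ω | (∀ i, i ≠ j → X ω i = x i) ∧ Xt ω = xt ∧ T ω = u})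
    -- `T` has the same conditional law given `(X_{-j}, X̃_{1:j-1})` as `X_j`:
    (hlaw : ∀ (x : Fin p → A) (xt : Fin m → A) (u : A),
      μ {ω | (∀ i, i ≠ j → X ω i = x i) ∧ Xt ω = xt ∧ T ω = u}
        = μ {ω | X ω = Function.update x j u ∧ Xt ω = xt}) :
    ∀ (x : Fin p → A) (xt : Fin m → A) (u : A),
      (μ {ω | X ω = x ∧ Xt ω = xt ∧ T ω = u}
          = μ {ω | X ω = x ∧ Xt ω = xt}
            * μ {ω | X ω = Function.update x j u ∧ Xt ω = xt}
            / ∑ u' : A, μ {ω | X ω = Function.update x j u' ∧ Xt ω = xt}) ∧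
      μ {ω | X ω = x ∧ Xt ω = xt ∧ T ω = u}
          = μ {ω | X ω = Function.update x j u ∧ Xt ω = xt ∧ T ω = x j} := by
  have hms : ∀ (x : Fin p → A) (xt : Fin m → A),
      MeasurableSet {ω | X ω = x ∧ Xt ω = xt} := fun x xt =>
    (hX (measurableSet_singleton x)).inter (hXt (measurableSet_singleton xt))
  have hsum : ∀ (x : Fin p → A) (xt : Fin m → A),
      μ {ω | (∀ i, i ≠ j → X ω i = x i) ∧ Xt ω = xt}
        = ∑ u' : A, μ {ω | X ω = Function.update x j u' ∧ Xt ω = xt} := by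
    intro x xt
    have hset : {ω | (∀ i, i ≠ j → X ω i = x i) ∧ Xt ω = xt}
        = ⋃ u' : A, {ω | X ω = Function.update x j u' ∧ Xt ω = xt} := by
      ext ω
      simp only [Set.mem_setOf_eq, Set.mem_iUnion]
      constructor
      · rintro ⟨h1, h2⟩
        refine ⟨X ω j, ?_, h2⟩
        funext i
        by_cases hi : i = j
        · subst hi; simp
        · simp [Function.update_of_ne hi, h1 i hi]
      · rintro ⟨u', h1, h2⟩
        refine ⟨fun i hi => ?_, h2⟩
        rw [h1, Function.update_of_ne hi]
    have hdisj : Pairwise (Function.onFun Disjoint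
        (fun u' : A => {ω | X ω = Function.update x j u' ∧ Xt ω = xt})) := by
      intro a b hab
      refine Set.disjoint_left.2 ?_
      rintro ω ⟨ha, _⟩ ⟨hb, _⟩
      apply hab
      have := ha.symm.trans hb
      have := congrFun this j
      simpa using this
    rw [hset, measure_iUnion hdisj (fun u' => hms _ _), tsum_fintype]
  have key : ∀ (x : Fin p → A) (xt : Fin m → A) (u : A),
      μ {ω | X ω = x ∧ Xt ω = xt ∧ T ω = u}
        = μ {ω | X ω = x ∧ Xt ω = xt}
          * μ {ω | X ω = Function.update x j u ∧ Xt ω = xt}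
          / ∑ u' : A, μ {ω | X ω = Function.update x j u' ∧ Xt ω = xt} := by
    intro x xt u
    have hmul := hci x xt u
    rw [hlaw x xt u] at hmul
    rw [← hsum x xt]
    by_cases h0 : μ {ω | (∀ i, i ≠ j → X ω i = x i) ∧ Xt ω = xt} = 0
    · have hsub1 : {ω | X ω = x ∧ Xt ω = xt ∧ T ω = u}
          ⊆ {ω | (∀ i, i ≠ j → X ω i = x i) ∧ Xt ω = xt} := by
        intro ω hω
        exact ⟨fun i _ => by rw [hω.1], hω.2.1⟩
      have hsub2 : {ω | X ω = x ∧ Xt ω = xt}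
          ⊆ {ω | (∀ i, i ≠ j → X ω i = x i) ∧ Xt ω = xt} := by
        intro ω hω
        exact ⟨fun i _ => by rw [hω.1], hω.2⟩
      have hC : μ {ω | X ω = x ∧ Xt ω = xt ∧ T ω = u} = 0 :=
        measure_mono_null hsub1 h0
      have hA : μ {ω | X ω = x ∧ Xt ω = xt} = 0 :=
        measure_mono_null hsub2 h0
      rw [hC, hA, h0]; simp
    · rw [ENNReal.eq_div_iff h0 (measure_ne_top μ _), mul_comm]
      exact hmul
  intro x xt u
  refine ⟨key x xt u, ?_⟩
  have e1 : Function.update (Function.update x j u) j (x j) = x := by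
    rw [Function.update_idem, Function.update_eq_self]
  have e2 : ∀ u', Function.update (Function.update x j u) j u'
      = Function.update x j u' := fun u' => Function.update_idem ..
  rw [key x xt u, key (Function.update x j u) xt (x j)]
  simp only [e1, e2]
  rw [mul_comm]
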